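/- Let N : Ω → ℕ₀ be a random variable on a probability space (Ω, μ) whose l-th factorial moments satisfy E[N(N-1)⋯(N-l+1)] ≤ κ^l for all l ∈ ℕ and some κ > 0. Then for every β > 0, E[e^{βN}] ≤ exp(κ(e^β - 1)). -/

import Mathlib

open MeasureTheory Nat

noncomputable section

theorem stmt7 {Ω : Type*} [MeasurableSpace Ω] (μ : Measure Ω) [IsProbabilityMeasure μ]
    (N : Ω → ℕ) (hmeas : Measurable N) (κ : ℝ) (hκ : 0 < κ)
    (hint : ∀ l : ℕ, Integrable (fun ω => ((N ω).descFactorial l : ℝ)) μ)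
    (hfm : ∀ l : ℕ, 1 ≤ l → ∫ ω, ((N ω).descFactorial l : ℝ) ∂μ ≤ κ ^ l)
    (β : ℝ) (hβ : 0 < β)
    (hexp : Integrable (fun ω => Real.exp (β * N ω)) μ) :
    ∫ ω, Real.exp (β * N ω) ∂μ ≤ Real.exp (κ * (Real.exp β - 1)) := by
  set x : ℝ := Real.exp β - 1 with hxdef
  have hx : 0 < x := by
    have := Real.add_one_lt_exp (ne_of_gt hβ)
    simp only [hxdef]; linarith
  set g : ℕ → Ω → ℝ := fun l ω => ((N ω).descFactorial l : ℝ) * (x ^ l / l !) with hg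
  have hg_nonneg : ∀ l ω, 0 ≤ g l ω := fun l ω => by
    apply mul_nonneg (Nat.cast_nonneg _)
    positivity
  -- pointwise expansion
  have key : ∀ ω, Real.exp (β * N ω) = ∑' l : ℕ, g l ω := by
    intro ω
    set n := N ω
    have h1 : Real.exp (β * n) = (1 + x) ^ n := by
      rw [mul_comm, Real.exp_nat_mul]
      congr 1
      simp [hxdef]
    have h2 : (1 + x) ^ n = ∑ l ∈ Finset.range (n + 1), g l ω := by
      rw [add_comm, add_pow]
      apply Finset.sum_congr rfl
      intro l hl
      simp only [hg, one_pow, mul_one]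
      rw [Nat.descFactorial_eq_factorial_mul_choose]
      push_cast
      field_simp
      ring
    rw [h1, h2]
    refine (tsum_eq_sum ?_).symm
    intro l hl
    simp only [Finset.mem_range, not_lt] at hl
    have : n.descFactorial l = 0 := Nat.descFactorial_eq_zero_iff_lt.2 (by omega)
    simp [hg, this]
    left; show n < l; omega
  have hsummable : ∀ ω, Summable (fun l => g l ω) := by
    intro ω
    apply summable_of_ne_finset_zero (s := Finset.range (N ω + 1))
    intro l hl
    simp only [Finset.mem_range, not_lt] at hl
    have : (N ω).descFactorial l = 0 := Nat.descFactorial_eq_zero_iff_lt.2 (by omega)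
    simp [hg, this]
  -- integral bounds for each term
  have hgint : ∀ l, Integrable (g l) μ := fun l => (hint l).mul_const _
  have hmom : ∀ l : ℕ, ∫ ω, ((N ω).descFactorial l : ℝ) ∂μ ≤ κ ^ l := by
    intro l
    rcases Nat.eq_zero_or_pos l with rfl | hl
    · simp
    · exact hfm l hl
  have hterm : ∀ l, ∫ ω, g l ω ∂μ ≤ (κ * x) ^ l / l ! := by
    intro l
    simp only [hg]
    rw [integral_mul_const]
    have h1 : (∫ ω, ((N ω).descFactorial l : ℝ) ∂μ) * (x ^ l / l !)
        ≤ κ ^ l * (x ^ l / l !) :=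
      mul_le_mul_of_nonneg_right (hmom l) (by positivity)
    calc (∫ ω, ((N ω).descFactorial l : ℝ) ∂μ) * (x ^ l / l !)
        ≤ κ ^ l * (x ^ l / l !) := h1
      _ = (κ * x) ^ l / l ! := by rw [mul_pow]; ring
  -- measurability
  have hgmeas : ∀ l, AEMeasurable (fun ω => ENNReal.ofReal (g l ω)) μ := by
    intro l
    apply ENNReal.measurable_ofReal.comp_aemeasurable
    exact ((measurable_from_top (f := fun n : ℕ => ((n.descFactorial l : ℝ) * (x ^ l / l !)))).comp hmeas).aemeasurable
  -- main chain in ℝ≥0∞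
  have hch : ∫⁻ ω, ENNReal.ofReal (Real.exp (β * N ω)) ∂μ
      ≤ ENNReal.ofReal (Real.exp (κ * x)) := by
    have e1 : ∀ ω, ENNReal.ofReal (Real.exp (β * N ω)) = ∑' l, ENNReal.ofReal (g l ω) := by
      intro ω
      rw [key ω, ENNReal.ofReal_tsum_of_nonneg (fun l => hg_nonneg l ω) (hsummable ω)]
    calc ∫⁻ ω, ENNReal.ofReal (Real.exp (β * N ω)) ∂μ
        = ∫⁻ ω, ∑' l, ENNReal.ofReal (g l ω) ∂μ := by simp_rw [e1]
      _ = ∑' l, ∫⁻ ω, ENNReal.ofReal (g l ω) ∂μ := lintegral_tsum hgmeas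
      _ = ∑' l, ENNReal.ofReal (∫ ω, g l ω ∂μ) := by
          congr 1; ext l
          rw [← ofReal_integral_eq_lintegral_ofReal (hgint l)
            (Filter.Eventually.of_forall (hg_nonneg l))]
      _ ≤ ∑' l, ENNReal.ofReal ((κ * x) ^ l / l !) :=
          ENNReal.tsum_le_tsum (fun l => ENNReal.ofReal_le_ofReal (hterm l))
      _ = ENNReal.ofReal (∑' l, (κ * x) ^ l / l !) := by
          rw [ENNReal.ofReal_tsum_of_nonneg (fun l => by positivity)
            (Real.summable_pow_div_factorial _)]
      _ = ENNReal.ofReal (Real.exp (κ * x)) := by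
          congr 1
          rw [Real.exp_eq_exp_ℝ, NormedSpace.exp_eq_tsum_div]
  -- conclude
  rw [integral_eq_lintegral_of_nonneg_ae
      (Filter.Eventually.of_forall fun ω => (Real.exp_pos _).le) hexp.aestronglyMeasurable]
  exact ENNReal.toReal_le_of_le_ofReal (Real.exp_pos _).le hch
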